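/- Let G be a group and let ḡ ∈ G^n, ḡ' ∈ G^{n'} be tuples. If πḡ = 1, then the concatenations ḡ·ḡ' and ḡ'·ḡ are braid-equivalent. -/

import Mathlib

/-- One Hurwitz braid move: replace adjacent entries `a, b` by `a*b*a⁻¹, a`. -/
inductive BraidMove (G : Type*) [Group G] : List G → List G → Prop
  | mk (l₁ l₂ : List G) (a b : G) :
      BraidMove G (l₁ ++ a :: b :: l₂) (l₁ ++ (a * b * a⁻¹) :: a :: l₂)

/-- Braid equivalence of tuples: the equivalence relation generated by Hurwitz moves. -/
def BraidEquiv (G : Type*) [Group G] : List G → List G → Prop :=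
  Relation.EqvGen (BraidMove G)

/-- Componentwise conjugation of a tuple: `ḡ^h = (h g₁ h⁻¹, …, h gₙ h⁻¹)`. -/
def conjList {G : Type*} [Group G] (h : G) (l : List G) : List G :=
  l.map fun x => h * x * h⁻¹

private theorem braidEquiv_context {G : Type*} [Group G] {l l' : List G} (c d : List G)
    (h : BraidEquiv G l l') : BraidEquiv G (c ++ l ++ d) (c ++ l' ++ d) := by
  induction h with
  | rel x y hxy =>
    obtain ⟨l₁, l₂, a, b⟩ := hxy
    apply Relation.EqvGen.rel
    have := BraidMove.mk (G := G) (c ++ l₁) (l₂ ++ d) a b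
    simpa [List.append_assoc] using this
  | refl x => exact Relation.EqvGen.refl _
  | symm x y _ ih => exact Relation.EqvGen.symm _ _ ih
  | trans x y z _ _ ih₁ ih₂ => exact Relation.EqvGen.trans _ _ _ ih₁ ih₂

private theorem braidEquiv_push {G : Type*} [Group G] (l : List G) (x : G) :
    BraidEquiv G (l ++ [x]) ((l.prod * x * l.prod⁻¹) :: l) := by
  induction l with
  | nil => simpa using (id (Relation.EqvGen.refl ([x] : List G)) : BraidEquiv G [x] [x])
  | cons a l ih =>
    have h1 : BraidEquiv G (a :: (l ++ [x])) (a :: (l.prod * x * l.prod⁻¹) :: l) := by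
      simpa using braidEquiv_context [a] [] ih
    refine Relation.EqvGen.trans _ _ _ h1 ?_
    have := Relation.EqvGen.rel _ _ (BraidMove.mk (G := G) [] l a (l.prod * x * l.prod⁻¹))
    simp only [List.nil_append] at this
    have key : a * (l.prod * x * l.prod⁻¹) * a⁻¹ = (a :: l).prod * x * ((a :: l).prod)⁻¹ := by
      simp [mul_assoc]
    rw [key] at this
    exact this

/-- if  then  and  are braid-equivalent. -/
theorem braidEquiv_append_comm {G : Type*} [Group G] (g g' : List G) (hg : g.prod = 1) :
    BraidEquiv G (g ++ g') (g' ++ g) := by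
  induction g' with
  | nil => simpa using (id (Relation.EqvGen.refl g) : BraidEquiv G g g)
  | cons y g' ih =>
    have h1 : BraidEquiv G (g ++ y :: g') ((g.prod * y * g.prod⁻¹ :: g) ++ g') := by
      have := braidEquiv_context [] g' (braidEquiv_push g y)
      simpa [List.append_assoc] using this
    rw [hg] at h1
    simp only [one_mul, inv_one, mul_one] at h1
    refine Relation.EqvGen.trans _ _ _ h1 ?_
    have h2 : BraidEquiv G (y :: (g ++ g')) (y :: (g' ++ g)) := by
      simpa using braidEquiv_context [y] [] ih
    simpa using (show Relation.EqvGen (BraidMove G) (y :: (g ++ g')) (y :: (g' ++ g)) from h2)
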